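/- Let G be a finite simple graph not containing K_4 as a minor, and let C be a cycle in G with four vertices v1, v2, v3, v4 appearing in this cyclic order on C. Then it is not the case that there exist both a path in G between v1 and v3 and a path in G between v2 and v4, each internally disjoint from C and from each other. -/

import Mathlib

open List SimpleGraph

section Aux
variable {α V : Type*} {G : SimpleGraph V} {R : α → α → Prop}

/-- Build a walk from a chain of adjacencies; endpoint packaged. -/
def chainWalk (G : SimpleGraph V) : (a : V) → (l : List V) → List.Chain G.Adj a l → (b : V) × G.Walk a b
  | a, [], _ => ⟨a, SimpleGraph.Walk.nil⟩
  | _, c :: l, h =>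
    let w := chainWalk G c l (List.chain_cons.mp h).2
    ⟨w.1, SimpleGraph.Walk.cons (List.chain_cons.mp h).1 w.2⟩

lemma chainWalk_support (a : V) (l : List V) (h : List.Chain G.Adj a l) :
    (chainWalk G a l h).2.support = a :: l := by
  induction l generalizing a with
  | nil => rfl
  | cons c l ih => simp [chainWalk]; exact ih _ _

lemma chain_cons_append : ∀ (l : List α) {a b : α} {m : List α},
    List.Chain' R (a :: (l ++ b :: m)) →
    List.Chain R a l ∧ R ((a :: l).getLast (List.cons_ne_nil a l)) b ∧ List.Chain' R (b :: m)
  | [], a, b, m, h => by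
    rw [List.nil_append] at h
    exact ⟨List.Chain.nil, (List.isChain_cons_cons.mp h).1, (List.isChain_cons_cons.mp h).2⟩
  | c :: l, a, b, m, h => by
    rw [List.cons_append] at h
    obtain ⟨h1, h2⟩ := List.isChain_cons_cons.mp h
    obtain ⟨hc, hg, hm⟩ := chain_cons_append l h2
    refine ⟨List.chain_cons.mpr ⟨h1, hc⟩, ?_, hm⟩
    simpa [List.getLast_cons] using hg

/-- a cyclic chain on a list -/
def CycChain (R : α → α → Prop) (l : List α) : Prop := List.Chain' R (l ++ l.take 1)

lemma CycChain.rotate_one {l : List α} (h : CycChain R l) : CycChain R (l.rotate 1) := by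
  cases l with
  | nil => simpa using h
  | cons a xs =>
    rw [show (1:ℕ) = 0 + 1 from rfl, List.rotate_cons_succ, List.rotate_zero]
    cases xs with
    | nil => simpa [CycChain] using h
    | cons b ys =>
      unfold CycChain at h ⊢
      simp only [List.take, List.cons_append, List.nil_append] at h ⊢
      obtain ⟨h1, h2⟩ := List.isChain_cons_cons.mp h
      rw [show b :: (ys ++ [a] ++ [b]) = (b :: (ys ++ [a])) ++ [b] by simp]
      show List.IsChain R _
      rw [List.isChain_append]
      refine ⟨by simpa using h2, List.isChain_singleton b, ?_⟩
      intro x hx y hy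
      simp only [List.head?_cons, Option.mem_def, Option.some.injEq] at hy
      subst hy
      have : (b :: (ys ++ [a])).getLast? = some a := by
        rw [show b :: (ys ++ [a]) = (b :: ys) ++ [a] by simp, List.getLast?_concat]
      rw [Option.mem_def, this, Option.some.injEq] at hx
      subst hx
      exact h1

lemma CycChain.rotate {l : List α} (h : CycChain R l) (n : ℕ) : CycChain R (l.rotate n) := by
  induction n with
  | zero => simpa using h
  | succ n ih => rw [← List.rotate_rotate]; exact ih.rotate_one

lemma _root_.List.IsRotated.cycChain {l l' : List α} (h : l ~r l') (hc : CycChain R l) :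
    CycChain R l' := by
  obtain ⟨n, rfl⟩ := h
  exact hc.rotate n

lemma walk_support_getLast {u v : V} (p : G.Walk u v) : p.support.getLast? = some v := by
  rw [← List.head?_reverse, ← SimpleGraph.Walk.support_reverse]
  rw [p.reverse.support_eq_cons]
  rfl

lemma walk_cons_of_ne {u v : V} (w : G.Walk u v) (h : u ≠ v) :
    ∃ (x : V) (h' : G.Adj u x) (R : G.Walk x v), w = SimpleGraph.Walk.cons h' R := by
  cases w with
  | nil => exact absurd rfl h
  | cons h' R => exact ⟨_, h', R, rfl⟩

lemma walk_induce_connected {u v : V} (w : G.Walk u v) :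
    (G.induce {x | x ∈ w.support}).Connected := by
  rw [SimpleGraph.induce_eq_coe_induce_top]
  refine SimpleGraph.Subgraph.Connected.coe (w.toSubgraph_connected.mono' ?_ ?_)
  · intro a b hab
    exact ⟨w.mem_verts_toSubgraph.mp (w.toSubgraph.edge_vert hab),
      w.mem_verts_toSubgraph.mp (w.toSubgraph.edge_vert hab.symm), hab.adj_sub⟩
  · rw [SimpleGraph.Walk.verts_toSubgraph]; rfl

lemma swap_edge {s t : Set V} (h : ∃ a ∈ s, ∃ b ∈ t, G.Adj a b) :
    ∃ a ∈ t, ∃ b ∈ s, G.Adj a b := by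
  obtain ⟨a, ha, b, hb, hab⟩ := h
  exact ⟨b, hb, a, ha, hab.symm⟩

end Aux

/-- `H` is a minor of `G`: there are pairwise disjoint nonempty connected branch
sets in `G`, one for each vertex of `H`, with an edge of `G` between the branch
sets of any two adjacent vertices of `H`. -/
def IsGraphMinor {W V : Type*} (H : SimpleGraph W) (G : SimpleGraph V) : Prop :=
  ∃ f : W → Set V,
    (∀ w, (f w).Nonempty) ∧
    (∀ w, (G.induce (f w)).Connected) ∧
    (∀ w₁ w₂, w₁ ≠ w₂ → Disjoint (f w₁) (f w₂)) ∧
    (∀ w₁ w₂, H.Adj w₁ w₂ → ∃ a ∈ f w₁, ∃ b ∈ f w₂, G.Adj a b)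

/-- If a finite simple graph `G` has no K₄ minor and `v₁, v₂, v₃, v₄` appear in
this cyclic order on a cycle `C` of `G`, then there do not exist a path from `v₁`
to `v₃` and a path from `v₂` to `v₄`, each internally disjoint from `C` (in
vertices and in edges) and disjoint from each other. -/
theorem stmt_6 {V : Type*} [Fintype V] (G : SimpleGraph V)
    (hK4 : ¬ IsGraphMinor (⊤ : SimpleGraph (Fin 4)) G)
    (r : V) (C : G.Walk r r) (hC : C.IsCycle)
    (v₁ v₂ v₃ v₄ : V)
    (horder : ∃ l₁ l₂ l₃ l₄ : List V,
      C.support.tail ~r (v₁ :: (l₁ ++ v₂ :: (l₂ ++ v₃ :: (l₃ ++ v₄ :: l₄))))) :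
    ¬ ∃ (P : G.Walk v₁ v₃) (Q : G.Walk v₂ v₄),
        P.IsPath ∧ Q.IsPath ∧
        (∀ x ∈ P.support, x ≠ v₁ → x ≠ v₃ → x ∉ C.support) ∧
        (∀ x ∈ Q.support, x ≠ v₂ → x ≠ v₄ → x ∉ C.support) ∧
        (∀ e ∈ P.edges, e ∉ C.edges) ∧
        (∀ e ∈ Q.edges, e ∉ C.edges) ∧
        (∀ x ∈ P.support, x ∉ Q.support) := by
  rintro ⟨P, Q, hP, hQ, hPC, hQC, -, -, hPQ⟩
  obtain ⟨l₁, l₂, l₃, l₄, hrot⟩ := horder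
  set L : List V := v₁ :: (l₁ ++ v₂ :: (l₂ ++ v₃ :: (l₃ ++ v₄ :: l₄))) with hL
  apply hK4
  -- basic list facts about the cycle support
  have htail_ne : C.support.tail ≠ [] := by
    have h3 := hC.three_le_length
    have hlen : C.support.tail.length = C.length := by
      have hl := C.length_support
      rw [C.support_eq_cons] at hl
      simpa using hl.symm
    intro h
    rw [h] at hlen
    simp at hlen
    omega
  obtain ⟨c₀, tl₀, htl₀⟩ : ∃ c tl, C.support.tail = c :: tl := by
    cases h : C.support.tail with
    | nil => exact absurd h htail_ne
    | cons c tl => exact ⟨c, tl, rfl⟩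
  have h4 : C.support.getLast? = some r := walk_support_getLast C
  have h5 : C.support.tail.getLast? = some r := by
    rw [C.support_eq_cons, htl₀, List.getLast?_cons_cons] at h4
    rw [htl₀]
    exact h4
  have ht : C.support.tail.dropLast ++ [r] = C.support.tail :=
    List.dropLast_append_getLast? r h5
  set t : List V := C.support.tail.dropLast with htdef
  -- membership
  have hrmem : r ∈ C.support.tail := by rw [← ht]; simp
  have hmemL : ∀ x, x ∈ C.support ↔ x ∈ L := by
    intro x
    constructor
    · intro hx
      rw [C.support_eq_cons] at hx
      rcases List.mem_cons.mp hx with rfl | hx'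
      · exact hrot.perm.mem_iff.mp hrmem
      · exact hrot.perm.mem_iff.mp hx'
    · intro hx
      rw [C.support_eq_cons]
      exact List.mem_cons_of_mem _ (hrot.perm.mem_iff.mpr hx)
  -- nodup
  have hLnd : L.Nodup := hrot.nodup_iff.mp hC.support_nodup
  -- cyclic chain
  have hCCrt : CycChain G.Adj (r :: t) := by
    unfold CycChain
    have : (r :: t) ++ (r :: t).take 1 = r :: (t ++ [r]) := by simp
    rw [this, htdef, ht, ← C.support_eq_cons]
    exact C.isChain_adj_support
  have hrtL : (r :: t) ~r L := by
    have h1 : (r :: t) ~r C.support.tail := by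
      rw [← ht]
      exact (List.isRotated_append : ([r] ++ t) ~r (t ++ [r]))
    exact h1.trans hrot
  have hCCL : CycChain G.Adj L := hrtL.cycChain hCCrt
  have hCC : List.Chain' G.Adj
      (v₁ :: (l₁ ++ v₂ :: (l₂ ++ v₃ :: (l₃ ++ v₄ :: (l₄ ++ v₁ :: []))))) := by
    have : L ++ L.take 1 = v₁ :: (l₁ ++ v₂ :: (l₂ ++ v₃ :: (l₃ ++ v₄ :: (l₄ ++ v₁ :: [])))) := by
      simp [hL]
    rw [← this]
    exact hCCL
  -- split the chain
  obtain ⟨hch1, hadj12, hCC2⟩ := chain_cons_append l₁ hCC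
  obtain ⟨hch2, hadj23, hCC3⟩ := chain_cons_append l₂ hCC2
  obtain ⟨hch3, hadj34, hCC4⟩ := chain_cons_append l₃ hCC3
  obtain ⟨hch4, hadj41, -⟩ := chain_cons_append l₄ hCC4
  -- pairwise disjointness of segments
  have hLnd' : ((v₁::l₁) ++ ((v₂::l₂) ++ ((v₃::l₃) ++ (v₄::l₄)))).Nodup := by
    simpa [hL] using hLnd
  rw [List.nodup_append', List.nodup_append', List.nodup_append'] at hLnd'
  obtain ⟨nd1, ⟨nd2, ⟨nd3, nd4, d34⟩, d2⟩, d1⟩ := hLnd'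
  rw [List.disjoint_append_right] at d1 d2
  obtain ⟨d12, d1'⟩ := d1
  rw [List.disjoint_append_right] at d1'
  obtain ⟨d13, d14⟩ := d1'
  obtain ⟨d23, d24⟩ := d2
  -- distinctness
  have h13 : v₁ ≠ v₃ := fun h => d13 (List.mem_cons_self) (h ▸ List.mem_cons_self)
  have h24 : v₂ ≠ v₄ := fun h => d24 (List.mem_cons_self) (h ▸ List.mem_cons_self)
  -- decompose P and Q
  obtain ⟨uP, hadjP, RP, hRPeq⟩ := walk_cons_of_ne P.reverse (Ne.symm h13)
  obtain ⟨uQ, hadjQ, RQ, hRQeq⟩ := walk_cons_of_ne Q.reverse (Ne.symm h24)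
  have hPrev : P.support.reverse = v₃ :: RP.support := by
    rw [← SimpleGraph.Walk.support_reverse, hRPeq, SimpleGraph.Walk.support_cons]
  have hQrev : Q.support.reverse = v₄ :: RQ.support := by
    rw [← SimpleGraph.Walk.support_reverse, hRQeq, SimpleGraph.Walk.support_cons]
  have hPmem : ∀ x, x ∈ P.support ↔ x = v₃ ∨ x ∈ RP.support := by
    intro x; rw [← List.mem_reverse, hPrev, List.mem_cons]
  have hQmem : ∀ x, x ∈ Q.support ↔ x = v₄ ∨ x ∈ RQ.support := by
    intro x; rw [← List.mem_reverse, hQrev, List.mem_cons]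
  have hv3RP : v₃ ∉ RP.support := by
    have := hP.reverse.support_nodup
    rw [hRPeq, SimpleGraph.Walk.support_cons, List.nodup_cons] at this
    exact this.1
  have hv4RQ : v₄ ∉ RQ.support := by
    have := hQ.reverse.support_nodup
    rw [hRQeq, SimpleGraph.Walk.support_cons, List.nodup_cons] at this
    exact this.1
  have hv1RP : v₁ ∈ RP.support := RP.end_mem_support
  have hv2RQ : v₂ ∈ RQ.support := RQ.end_mem_support
  have huPRP : uP ∈ RP.support := RP.start_mem_support
  have huQRQ : uQ ∈ RQ.support := RQ.start_mem_support
  -- the branch walks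
  set W1 := RP.append (chainWalk G v₁ l₁ hch1).2 with hW1def
  set W2 := RQ.append (chainWalk G v₂ l₂ hch2).2 with hW2def
  set W3 := (chainWalk G v₃ l₃ hch3).2 with hW3def
  set W4 := (chainWalk G v₄ l₄ hch4).2 with hW4def
  have hW1 : ∀ x, x ∈ W1.support ↔ x ∈ RP.support ∨ x ∈ l₁ := by
    intro x
    rw [hW1def, SimpleGraph.Walk.support_append, List.mem_append, chainWalk_support]
    rfl
  have hW2 : ∀ x, x ∈ W2.support ↔ x ∈ RQ.support ∨ x ∈ l₂ := by
    intro x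
    rw [hW2def, SimpleGraph.Walk.support_append, List.mem_append, chainWalk_support]
    rfl
  have hW3 : ∀ x, x ∈ W3.support ↔ x ∈ v₃ :: l₃ := by
    intro x; rw [hW3def, chainWalk_support]
  have hW4 : ∀ x, x ∈ W4.support ↔ x ∈ v₄ :: l₄ := by
    intro x; rw [hW4def, chainWalk_support]
  -- branch sets
  set S1 : Set V := {x | x ∈ W1.support} with hS1
  set S2 : Set V := {x | x ∈ W2.support} with hS2
  set S3 : Set V := {x | x ∈ W3.support} with hS3
  set S4 : Set V := {x | x ∈ W4.support} with hS4
  -- membership helpers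
  have hseg1 : ∀ x ∈ (v₁ :: l₁ : List V), x ∈ S1 := by
    intro x hx
    rcases List.mem_cons.mp hx with rfl | hx'
    · exact (hW1 x).mpr (Or.inl hv1RP)
    · exact (hW1 x).mpr (Or.inr hx')
  have hseg2 : ∀ x ∈ (v₂ :: l₂ : List V), x ∈ S2 := by
    intro x hx
    rcases List.mem_cons.mp hx with rfl | hx'
    · exact (hW2 x).mpr (Or.inl hv2RQ)
    · exact (hW2 x).mpr (Or.inr hx')
  have hv1S1 : v₁ ∈ S1 := hseg1 _ (List.mem_cons_self)
  have hv2S2 : v₂ ∈ S2 := hseg2 _ (List.mem_cons_self)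
  have hv3S3 : v₃ ∈ S3 := (hW3 v₃).mpr (List.mem_cons_self)
  have hv4S4 : v₄ ∈ S4 := (hW4 v₄).mpr (List.mem_cons_self)
  -- segments are on the cycle
  have hsub1 : ∀ x ∈ (v₁ :: l₁ : List V), x ∈ C.support := by
    intro x hx
    rw [hmemL, hL]
    rcases List.mem_cons.mp hx with rfl | hx'
    · simp
    · simp [hx']
  have hsub2 : ∀ x ∈ (v₂ :: l₂ : List V), x ∈ C.support := by
    intro x hx
    rw [hmemL, hL]
    rcases List.mem_cons.mp hx with rfl | hx'
    · simp
    · simp [hx']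
  have hsub3 : ∀ x ∈ (v₃ :: l₃ : List V), x ∈ C.support := by
    intro x hx
    rw [hmemL, hL]
    rcases List.mem_cons.mp hx with rfl | hx'
    · simp
    · simp [hx']
  have hsub4 : ∀ x ∈ (v₄ :: l₄ : List V), x ∈ C.support := by
    intro x hx
    rw [hmemL, hL]
    rcases List.mem_cons.mp hx with rfl | hx'
    · simp
    · simp [hx']
  -- interior characterization
  have hPonly : ∀ x ∈ P.support, x ∈ C.support → x = v₁ ∨ x = v₃ := by
    intro x hx hc
    by_contra hcon
    push_neg at hcon
    exact hPC x hx hcon.1 hcon.2 hc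
  have hQonly : ∀ x ∈ Q.support, x ∈ C.support → x = v₂ ∨ x = v₄ := by
    intro x hx hc
    by_contra hcon
    push_neg at hcon
    exact hQC x hx hcon.1 hcon.2 hc
  have hRPP : ∀ x ∈ RP.support, x ∈ P.support := fun x hx => (hPmem x).mpr (Or.inr hx)
  have hRQQ : ∀ x ∈ RQ.support, x ∈ Q.support := fun x hx => (hQmem x).mpr (Or.inr hx)
  -- disjointness of the four branch sets
  have D12 : Disjoint S1 S2 := by
    rw [Set.disjoint_left]
    intro x hx1 hx2
    rcases (hW1 x).mp hx1 with hx1' | hx1' <;> rcases (hW2 x).mp hx2 with hx2' | hx2'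
    · exact hPQ x (hRPP x hx1') (hRQQ x hx2')
    · rcases hPonly x (hRPP x hx1') (hsub2 x (List.mem_cons_of_mem _ hx2')) with rfl | rfl
      · exact d12 (List.mem_cons_self) (List.mem_cons_of_mem _ hx2')
      · exact hv3RP hx1'
    · rcases hQonly x (hRQQ x hx2') (hsub1 x (List.mem_cons_of_mem _ hx1')) with rfl | rfl
      · exact d12 (List.mem_cons_of_mem _ hx1') (List.mem_cons_self)
      · exact hv4RQ hx2'
    · exact d12 (List.mem_cons_of_mem _ hx1') (List.mem_cons_of_mem _ hx2')
  have D13 : Disjoint S1 S3 := by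
    rw [Set.disjoint_left]
    intro x hx1 hx3
    have hx3' := (hW3 x).mp hx3
    rcases (hW1 x).mp hx1 with hx1' | hx1'
    · rcases hPonly x (hRPP x hx1') (hsub3 x hx3') with rfl | rfl
      · exact d13 (List.mem_cons_self) hx3'
      · exact hv3RP hx1'
    · exact d13 (List.mem_cons_of_mem _ hx1') hx3'
  have D14 : Disjoint S1 S4 := by
    rw [Set.disjoint_left]
    intro x hx1 hx4
    have hx4' := (hW4 x).mp hx4
    rcases (hW1 x).mp hx1 with hx1' | hx1'
    · rcases hPonly x (hRPP x hx1') (hsub4 x hx4') with rfl | rfl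
      · exact d14 (List.mem_cons_self) hx4'
      · exact hv3RP hx1'
    · exact d14 (List.mem_cons_of_mem _ hx1') hx4'
  have D23 : Disjoint S2 S3 := by
    rw [Set.disjoint_left]
    intro x hx2 hx3
    have hx3' := (hW3 x).mp hx3
    rcases (hW2 x).mp hx2 with hx2' | hx2'
    · rcases hQonly x (hRQQ x hx2') (hsub3 x hx3') with rfl | rfl
      · exact d23 (List.mem_cons_self) hx3'
      · exact hv4RQ hx2'
    · exact d23 (List.mem_cons_of_mem _ hx2') hx3'
  have D24 : Disjoint S2 S4 := by
    rw [Set.disjoint_left]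
    intro x hx2 hx4
    have hx4' := (hW4 x).mp hx4
    rcases (hW2 x).mp hx2 with hx2' | hx2'
    · rcases hQonly x (hRQQ x hx2') (hsub4 x hx4') with rfl | rfl
      · exact d24 (List.mem_cons_self) hx4'
      · exact hv4RQ hx2'
    · exact d24 (List.mem_cons_of_mem _ hx2') hx4'
  have D34 : Disjoint S3 S4 := by
    rw [Set.disjoint_left]
    intro x hx3 hx4
    exact d34 ((hW3 x).mp hx3) ((hW4 x).mp hx4)
  -- edges between branch sets
  have E12 : ∃ a ∈ S1, ∃ b ∈ S2, G.Adj a b :=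
    ⟨_, hseg1 _ (List.getLast_mem _), v₂, hv2S2, hadj12⟩
  have E23 : ∃ a ∈ S2, ∃ b ∈ S3, G.Adj a b :=
    ⟨_, hseg2 _ (List.getLast_mem _), v₃, hv3S3, hadj23⟩
  have E34 : ∃ a ∈ S3, ∃ b ∈ S4, G.Adj a b :=
    ⟨_, (hW3 _).mpr (List.getLast_mem _), v₄, hv4S4, hadj34⟩
  have E14 : ∃ a ∈ S1, ∃ b ∈ S4, G.Adj a b :=
    ⟨v₁, hv1S1, _, (hW4 _).mpr (List.getLast_mem _), hadj41.symm⟩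
  have E13 : ∃ a ∈ S1, ∃ b ∈ S3, G.Adj a b :=
    ⟨uP, (hW1 uP).mpr (Or.inl huPRP), v₃, hv3S3, hadjP.symm⟩
  have E24 : ∃ a ∈ S2, ∃ b ∈ S4, G.Adj a b :=
    ⟨uQ, (hW2 uQ).mpr (Or.inl huQRQ), v₄, hv4S4, hadjQ.symm⟩
  -- assemble the minor
  refine ⟨![S1, S2, S3, S4], ?_, ?_, ?_, ?_⟩
  · intro w
    fin_cases w
    · exact ⟨v₁, hv1S1⟩
    · exact ⟨v₂, hv2S2⟩
    · exact ⟨v₃, hv3S3⟩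
    · exact ⟨v₄, hv4S4⟩
  · intro w
    fin_cases w
    · exact walk_induce_connected W1
    · exact walk_induce_connected W2
    · exact walk_induce_connected W3
    · exact walk_induce_connected W4
  · intro w₁ w₂ hne
    fin_cases w₁ <;> fin_cases w₂ <;>
      first
        | exact absurd rfl hne
        | exact D12 | exact D13 | exact D14 | exact D23 | exact D24 | exact D34
        | exact D12.symm | exact D13.symm | exact D14.symm | exact D23.symm
        | exact D24.symm | exact D34.symm
  · intro w₁ w₂ hadj
    fin_cases w₁ <;> fin_cases w₂ <;>
      first
        | exact (hadj.ne rfl).elim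
        | exact E12 | exact E13 | exact E14 | exact E23 | exact E24 | exact E34
        | exact swap_edge E12 | exact swap_edge E13 | exact swap_edge E14
        | exact swap_edge E23 | exact swap_edge E24 | exact swap_edge E34
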